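/- Let (X,S) be a non-degenerate, involutive and braided set-theoretical solution on a finite set X with n elements, and let M be its structure monoid. Since all defining relations of M are length-preserving, there is a unique monoid homomorphism ℓ : M → ℕ with ℓ(x) = 1 for every x ∈ X. If Δ ∈ M is a right lcm of the elements of X, then ℓ(Δ) = n. -/

import Mathlib

namespace YBE

/-- `(X,S)` is non-degenerate: all the maps `g_x = y ↦ S(x,y).1` and
`f_y = x ↦ S(x,y).2` are bijective. -/
def Nondegenerate {X : Type*} (S : X × X → X × X) : Prop :=
  (∀ x : X, Function.Bijective fun y => (S (x, y)).1) ∧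
  (∀ y : X, Function.Bijective fun x => (S (x, y)).2)

/-- `(X,S)` is involutive: `S ∘ S = id`. -/
def InvolutiveSol {X : Type*} (S : X × X → X × X) : Prop := S ∘ S = id

/-- `S¹² = S × id` on `X × X × X`. -/
def S12 {X : Type*} (S : X × X → X × X) : X × X × X → X × X × X :=
  fun p => ((S (p.1, p.2.1)).1, (S (p.1, p.2.1)).2, p.2.2)

/-- `S²³ = id × S` on `X × X × X`. -/
def S23 {X : Type*} (S : X × X → X × X) : X × X × X → X × X × X :=
  fun p => (p.1, S (p.2.1, p.2.2))

/-- `(X,S)` is braided: `S¹² ∘ S²³ ∘ S¹² = S²³ ∘ S¹² ∘ S²³`. -/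
def BraidedSol {X : Type*} (S : X × X → X × X) : Prop :=
  S12 S ∘ S23 S ∘ S12 S = S23 S ∘ S12 S ∘ S23 S

/-- The map `g_x : y ↦ S(x,y).1`. -/
def gmap {X : Type*} (S : X × X → X × X) (x : X) : X → X := fun y => (S (x, y)).1

/-- The map `f_y : x ↦ S(x,y).2`. -/
def fmap {X : Type*} (S : X × X → X × X) (y : X) : X → X := fun x => (S (x, y)).2

/-- The inverse `g_x⁻¹` of the (bijective) map `g_x`. -/
noncomputable def ginv {X : Type*} [Nonempty X] (S : X × X → X × X) (x : X) : X → X :=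
  Function.invFun (gmap S x)

/-- The inverse `f_y⁻¹` of the (bijective) map `f_y`. -/
noncomputable def finv {X : Type*} [Nonempty X] (S : X × X → X × X) (y : X) : X → X :=
  Function.invFun (fmap S y)

/-- The defining relations of the structure monoid: `x·y = t·z` whenever `S(x,y) = (t,z)`. -/
def ybRel {X : Type*} (S : X × X → X × X) : FreeMonoid X → FreeMonoid X → Prop :=
  fun a b => ∃ x y : X, a = FreeMonoid.of x * FreeMonoid.of y ∧
    b = FreeMonoid.of (S (x, y)).1 * FreeMonoid.of (S (x, y)).2

/-- The structure monoid of `(X,S)`: the monoid presented by generating set `X` and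
relations `x·y = t·z` for each `x,y,t,z` with `S(x,y) = (t,z)`. -/
abbrev StructureMonoid {X : Type*} (S : X × X → X × X) : Type _ :=
  (conGen (ybRel S)).Quotient

/-- The image in the structure monoid of a generator `x ∈ X`. -/
def smi {X : Type*} (S : X × X → X × X) (x : X) : StructureMonoid S :=
  (conGen (ybRel S)).mk' (FreeMonoid.of x)

/-- The defining relations of the structure group, as elements of the free group. -/
def ybGRels {X : Type*} (S : X × X → X × X) : Set (FreeGroup X) :=
  {w | ∃ x y : X, w = FreeGroup.of x * FreeGroup.of y *
    (FreeGroup.of (S (x, y)).1 * FreeGroup.of (S (x, y)).2)⁻¹}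

/-- The structure group of `(X,S)`: the group presented by generating set `X` and
relations `x·y = t·z` for each `x,y,t,z` with `S(x,y) = (t,z)`. -/
abbrev StructureGroup {X : Type*} (S : X × X → X × X) : Type _ :=
  PresentedGroup (ybGRels S)

/-- `a` left-divides `b`. -/
def LDvd {M : Type*} [Monoid M] (a b : M) : Prop := ∃ c, b = a * c

/-- `m` is a right lcm of the family `a`: each `a i` left-divides `m`, and `m`
left-divides every common right multiple of the `a i`. -/
def IsRightLcm {M : Type*} [Monoid M] {ι : Sort*} (a : ι → M) (m : M) : Prop :=
  (∀ i, LDvd (a i) m) ∧ ∀ w, (∀ i, LDvd (a i) w) → LDvd m w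

/-! ### Auxiliary material -/

/-- Auxiliary target monoid: multisets with a twisting map. -/
@[ext] structure Tm (X : Type*) where
  m : Multiset X
  f : X → X

instance {X : Type*} : Mul (Tm X) := ⟨fun a b => ⟨a.m + Multiset.map a.f b.m, a.f ∘ b.f⟩⟩
instance {X : Type*} : One (Tm X) := ⟨⟨0, id⟩⟩

lemma Tm.mul_m {X : Type*} (a b : Tm X) : (a * b).m = a.m + Multiset.map a.f b.m := rfl
lemma Tm.mul_f {X : Type*} (a b : Tm X) : (a * b).f = a.f ∘ b.f := rfl
lemma Tm.one_m {X : Type*} : (1 : Tm X).m = 0 := rfl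
lemma Tm.one_f {X : Type*} : (1 : Tm X).f = id := rfl

instance {X : Type*} : Monoid (Tm X) where
  mul_assoc a b c := by
    ext1
    · simp [Tm.mul_m, Tm.mul_f, Multiset.map_map, add_assoc, Function.comp_def]
    · rfl
  one_mul a := by
    ext1
    · simp [Tm.mul_m, Tm.one_m, Tm.one_f]
    · rfl
  mul_one a := by
    ext1
    · simp [Tm.mul_m, Tm.one_m]
    · rfl

def cardHom {X : Type*} : Tm X →* Multiplicative ℕ where
  toFun a := Multiplicative.ofAdd (Multiset.card a.m)
  map_one' := by simp [Tm.one_m]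
  map_mul' a b := by simp [Tm.mul_m, ← ofAdd_add]

section Sol

variable {X : Type*} (S : X × X → X × X)

lemma inv_fst (hinv : InvolutiveSol S) (x y : X) :
    (S ((S (x, y)).1, (S (x, y)).2)).1 = x := by
  have h : S (S (x, y)) = (x, y) := congrFun hinv (x, y)
  rw [Prod.mk.eta, h]

lemma g_braid (hbr : BraidedSol S) (x y : X) :
    gmap S (S (x, y)).1 ∘ gmap S (S (x, y)).2 = gmap S x ∘ gmap S y := by
  funext w
  have h := congrFun hbr (x, (y, w))
  simp only [Function.comp_apply, S12, S23] at h
  have h1 := congrArg Prod.fst h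
  simpa [gmap] using h1

/-- The key relation in the structure monoid. -/
lemma smi_rel (x y : X) :
    smi S x * smi S y = smi S (S (x, y)).1 * smi S (S (x, y)).2 := by
  unfold smi
  rw [← map_mul, ← map_mul]
  exact (Con.eq _).mpr (ConGen.Rel.of _ _ ⟨x, y, rfl, rfl⟩)

def phi0 : FreeMonoid X →* Tm X := FreeMonoid.lift (fun x => ⟨{x}, gmap S x⟩)

lemma phi0_rel (hinv : InvolutiveSol S) (hbr : BraidedSol S) :
    ∀ a b, ybRel S a b → phi0 S a = phi0 S b := by
  rintro a b ⟨x, y, rfl, rfl⟩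
  rw [map_mul, map_mul]
  have e1 : phi0 S (FreeMonoid.of x) = ⟨{x}, gmap S x⟩ := rfl
  have e2 : phi0 S (FreeMonoid.of y) = ⟨{y}, gmap S y⟩ := rfl
  have e3 : phi0 S (FreeMonoid.of (S (x, y)).1) = ⟨{(S (x, y)).1}, gmap S (S (x, y)).1⟩ := rfl
  have e4 : phi0 S (FreeMonoid.of (S (x, y)).2) = ⟨{(S (x, y)).2}, gmap S (S (x, y)).2⟩ := rfl
  rw [e1, e2, e3, e4]
  ext1
  · show ({x} : Multiset X) + Multiset.map (gmap S x) {y}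
      = {(S (x, y)).1} + Multiset.map (gmap S (S (x, y)).1) {(S (x, y)).2}
    have h1 : gmap S x y = (S (x, y)).1 := rfl
    have h2 : gmap S (S (x, y)).1 (S (x, y)).2 = x := inv_fst S hinv x y
    rw [Multiset.map_singleton, Multiset.map_singleton, h1, h2]
    exact add_comm _ _
  · show gmap S x ∘ gmap S y = gmap S (S (x, y)).1 ∘ gmap S (S (x, y)).2
    exact (g_braid S hbr x y).symm

def Phi (hinv : InvolutiveSol S) (hbr : BraidedSol S) : StructureMonoid S →* Tm X :=
  Con.lift _ (phi0 S) ((Con.conGen_le).mpr fun a b h => (Con.ker_rel _).mpr (phi0_rel S hinv hbr a b h))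

lemma Phi_smi (hinv : InvolutiveSol S) (hbr : BraidedSol S) (x : X) :
    Phi S hinv hbr (smi S x) = ⟨{x}, gmap S x⟩ := by
  unfold Phi smi
  rw [Con.lift_mk']
  rfl

/-- uniqueness of monoid homs out of the structure monoid agreeing on generators -/
lemma hom_unique (ℓ₁ ℓ₂ : StructureMonoid S →* Multiplicative ℕ)
    (h : ∀ x, ℓ₁ (smi S x) = ℓ₂ (smi S x)) : ℓ₁ = ℓ₂ := by
  have hcomp : ℓ₁.comp (conGen (ybRel S)).mk' = ℓ₂.comp (conGen (ybRel S)).mk' :=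
    FreeMonoid.hom_eq fun x => h x
  refine MonoidHom.ext fun m => ?_
  obtain ⟨w, rfl⟩ := Con.mk'_surjective (c := conGen (ybRel S)) m
  exact DFunLike.congr_fun hcomp w

def philist : List X → Multiset X
  | [] => 0
  | a :: w => a ::ₘ Multiset.map (gmap S a) (philist w)

lemma Phi_word (hinv : InvolutiveSol S) (hbr : BraidedSol S) (w : List X) :
    (Phi S hinv hbr ((conGen (ybRel S)).mk' (FreeMonoid.ofList w))).m = philist S w := by
  induction w with
  | nil =>
    rw [FreeMonoid.ofList_nil, map_one, map_one]
    rfl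
  | cons a w ih =>
    rw [FreeMonoid.ofList_cons, map_mul, map_mul]
    have : (conGen (ybRel S)).mk' (FreeMonoid.of a) = smi S a := rfl
    rw [this, Tm.mul_m, Phi_smi, ih]
    show ({a} : Multiset X) + Multiset.map (gmap S a) (philist S w) = philist S (a :: w)
    rw [philist, Multiset.singleton_add]

lemma dvd_of_mem (w : List X) (x : X) (hx : x ∈ philist S w) :
    LDvd (smi S x) ((conGen (ybRel S)).mk' (FreeMonoid.ofList w)) := by
  induction w generalizing x with
  | nil => simp [philist] at hx
  | cons a w ih =>
    rw [philist, Multiset.mem_cons] at hx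
    rcases hx with rfl | hx'
    · exact ⟨(conGen (ybRel S)).mk' (FreeMonoid.ofList w),
        by rw [FreeMonoid.ofList_cons, map_mul]; rfl⟩
    · obtain ⟨y, hy, rfl⟩ := Multiset.mem_map.mp hx'
      obtain ⟨c, hc⟩ := ih y hy
      refine ⟨smi S (S (a, y)).2 * c, ?_⟩
      rw [FreeMonoid.ofList_cons, map_mul, hc]
      have h1 : (conGen (ybRel S)).mk' (FreeMonoid.of a) = smi S a := rfl
      rw [h1, ← mul_assoc, ← mul_assoc, smi_rel S a y]
      rfl

noncomputable def buildWord [Nonempty X] : (X → X) → List X → List X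
  | _, [] => []
  | h, v :: L =>
    Function.invFun h v :: buildWord (h ∘ gmap S (Function.invFun h v)) L

lemma philist_buildWord [Nonempty X] (hg : ∀ x, Function.Bijective (gmap S x)) :
    ∀ (L : List X) (h : X → X), Function.Bijective h →
      Multiset.map h (philist S (buildWord S h L)) = (L : Multiset X) := by
  intro L
  induction L with
  | nil => intro h hh; simp [buildWord, philist]
  | cons v L ih =>
    intro h hh
    rw [buildWord, philist, Multiset.map_cons, Multiset.map_map,
      ih (h ∘ gmap S (Function.invFun h v)) (hh.comp (hg _)),
      Function.invFun_eq (hh.surjective v)]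
    rfl

end Sol

/-- There is a unique length homomorphism `ℓ` on the structure monoid with `ℓ(x) = 1` for
every generator `x`, and `ℓ(Δ) = |X|` for any right lcm `Δ` of the generators. -/
theorem stmt8 {X : Type*} [Finite X] (S : X × X → X × X)
    (hnd : Nondegenerate S) (hinv : InvolutiveSol S) (hbr : BraidedSol S) :
    (∃! ℓ : StructureMonoid S →* Multiplicative ℕ,
      ∀ x : X, ℓ (smi S x) = Multiplicative.ofAdd 1) ∧
    (∀ ℓ : StructureMonoid S →* Multiplicative ℕ,
      (∀ x : X, ℓ (smi S x) = Multiplicative.ofAdd 1) →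
      ∀ Δ : StructureMonoid S, IsRightLcm (fun x : X => smi S x) Δ →
        ℓ Δ = Multiplicative.ofAdd (Nat.card X)) := by
  classical
  have hg : ∀ x, Function.Bijective (gmap S x) := hnd.1
  set ℓ0 : StructureMonoid S →* Multiplicative ℕ := cardHom.comp (Phi S hinv hbr) with hℓ0def
  have hℓ0 : ∀ x : X, ℓ0 (smi S x) = Multiplicative.ofAdd 1 := by
    intro x
    show cardHom (Phi S hinv hbr (smi S x)) = Multiplicative.ofAdd 1
    rw [Phi_smi]
    show Multiplicative.ofAdd (Multiset.card ({x} : Multiset X)) = Multiplicative.ofAdd 1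
    rw [Multiset.card_singleton]
  have huniq : ∀ ℓ' : StructureMonoid S →* Multiplicative ℕ,
      (∀ x : X, ℓ' (smi S x) = Multiplicative.ofAdd 1) → ℓ' = ℓ0 := by
    intro ℓ' h'
    exact hom_unique S ℓ' ℓ0 fun x => (h' x).trans (hℓ0 x).symm
  refine ⟨⟨ℓ0, hℓ0, huniq⟩, ?_⟩
  intro ℓ hℓ Δ hΔ
  rw [huniq ℓ hℓ]
  suffices h : Multiset.card (Phi S hinv hbr Δ).m = Nat.card X by
    show Multiplicative.ofAdd (Multiset.card (Phi S hinv hbr Δ).m) = _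
    rw [h]
  haveI := Fintype.ofFinite X
  -- lower bound
  have hlow : (Finset.univ : Finset X).val ≤ (Phi S hinv hbr Δ).m := by
    rw [Multiset.le_iff_count]
    intro x
    have hmem : x ∈ (Phi S hinv hbr Δ).m := by
      obtain ⟨c, hc⟩ := hΔ.1 x
      rw [hc, map_mul, Tm.mul_m, Phi_smi]
      exact Multiset.mem_add.mpr (Or.inl (Multiset.mem_singleton_self x))
    calc Multiset.count x (Finset.univ : Finset X).val ≤ 1 :=
          (Multiset.nodup_iff_count_le_one.mp Finset.univ.nodup) x
      _ ≤ Multiset.count x (Phi S hinv hbr Δ).m := Multiset.count_pos.mpr hmem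
  have hlow' : Nat.card X ≤ Multiset.card (Phi S hinv hbr Δ).m := by
    have h1 := Multiset.card_le_card hlow
    have h2 : Multiset.card (Finset.univ : Finset X).val = Fintype.card X := rfl
    rw [Nat.card_eq_fintype_card, ← h2]
    exact h1
  -- upper bound
  rcases isEmpty_or_nonempty X with hE | hNE
  · have hc1 := hΔ.2 1 (fun x => isEmptyElim x)
    obtain ⟨c, hc⟩ := hc1
    have h0 : Multiset.card (Phi S hinv hbr (1 : StructureMonoid S)).m = 0 := by
      rw [map_one]; rfl
    rw [hc, map_mul, Tm.mul_m, Multiset.card_add] at h0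
    have hz : Nat.card X = 0 := by
      haveI := hE
      rw [Nat.card_eq_fintype_card, Fintype.card_eq_zero]
    omega
  · set L : List X := (Finset.univ : Finset X).toList with hL
    set w : List X := buildWord S id L with hw
    have hbw := philist_buildWord S hg L id Function.bijective_id
    have hplw : philist S w = (Finset.univ : Finset X).val := by
      rw [← hw] at hbw
      rw [← Multiset.map_id (philist S w), hbw, hL, Finset.coe_toList]
    have hdvdW : ∀ x : X, LDvd (smi S x) ((conGen (ybRel S)).mk' (FreeMonoid.ofList w)) := by
      intro x
      exact dvd_of_mem S w x (by rw [hplw]; exact Finset.mem_univ x)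
    obtain ⟨c, hc⟩ := hΔ.2 _ hdvdW
    have hW : Multiset.card (Phi S hinv hbr ((conGen (ybRel S)).mk' (FreeMonoid.ofList w))).m
        = Nat.card X := by
      rw [Phi_word, hplw]
      have h2 : Multiset.card (Finset.univ : Finset X).val = Fintype.card X := rfl
      rw [h2, Nat.card_eq_fintype_card]
    rw [hc, map_mul, Tm.mul_m, Multiset.card_add] at hW
    omega
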